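/- Let k ≥ 12 be an even integer, let w = k − 2, and let f be a cusp form of weight k for SL(2,ℤ). Define the period polynomial r_f(X) = ∫_0^∞ f(it)·(X − it)^w dt. Then for every complex X ≠ 0, r_f(X) + X^w·r_f(−1/X) = 0. -/

import Mathlib

open Real Complex UpperHalfPlane MatrixGroups MeasureTheory

/-- Eichler–Shimura relation `r_f|(1+S) = 0`: for a cusp form `f` of even
weight `k ≥ 12` for `SL(2,ℤ)` and `w = k - 2`, the period polynomial
`r_f(X) = ∫_0^∞ f(it) (X - it)^w dt` satisfies `r_f(X) + X^w r_f(-1/X) = 0` for `X ≠ 0`. -/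
theorem period_relation_S
    (k : ℕ) (hk : 12 ≤ k) (hkeven : Even k)
    (f : CuspForm (⊤ : Subgroup SL(2, ℤ)) (k : ℤ))
    (F : ℝ → ℂ)
    (hF : ∀ (t : ℝ) (ht : 0 < t),
      F t = f (⟨Complex.I * t, by simpa using ht⟩ : UpperHalfPlane))
    (R : ℂ → ℂ)
    (hR : ∀ X : ℂ, R X = ∫ t in Set.Ioi (0 : ℝ), F t * (X - Complex.I * t) ^ (k - 2)) :
    ∀ X : ℂ, X ≠ 0 → R X + X ^ (k - 2) * R (-1 / X) = 0 := by
  obtain ⟨w, rfl⟩ : ∃ w, k = w + 2 := ⟨k - 2, by omega⟩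
  have hw : Even w := by
    rcases hkeven with ⟨m, hm⟩
    exact ⟨m - 1, by omega⟩
  simp only [Nat.add_sub_cancel] at hR ⊢
  intro X hX
  -- modular transformation
  have hmod : ∀ t : ℝ, 0 < t → F t⁻¹ = (Complex.I * t) ^ (w + 2) * F t := by
    intro t ht
    rw [hF t⁻¹ (inv_pos.mpr ht), hF t ht]
    set z : UpperHalfPlane := ⟨Complex.I * t, by simpa using ht⟩
    have h := SlashInvariantForm.slash_action_eqn''
      f (Subgroup.mem_map_of_mem (Matrix.SpecialLinearGroup.mapGL ℝ)
        (Subgroup.mem_top ModularGroup.S)) z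
    change f (ModularGroup.S • z) = _ at h
    have hz : ModularGroup.S • z =
        (⟨Complex.I * (t⁻¹ : ℝ), by simpa using inv_pos.mpr ht⟩ : UpperHalfPlane) := by
      rw [UpperHalfPlane.modular_S_smul]
      ext
      show (-(Complex.I * (t:ℂ)))⁻¹ = Complex.I * ((t⁻¹:ℝ):ℂ)
      push_cast
      simp [inv_neg, mul_inv, Complex.inv_I, mul_comm]
    have hden : UpperHalfPlane.denom (Matrix.SpecialLinearGroup.mapGL ℝ ModularGroup.S) z
        = Complex.I * t := by
      simp [UpperHalfPlane.denom, z, Matrix.SpecialLinearGroup.mapGL_coe_matrix]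
    rw [hz, hden] at h
    rw [zpow_natCast] at h
    exact h
  -- change of variables t ↦ t⁻¹
  have himg : (fun t : ℝ => t⁻¹) '' Set.Ioi 0 = Set.Ioi 0 := by
    ext x
    simp only [Set.mem_image, Set.mem_Ioi]
    constructor
    · rintro ⟨y, hy, rfl⟩; exact inv_pos.mpr hy
    · intro hx; exact ⟨x⁻¹, inv_pos.mpr hx, inv_inv x⟩
  have hsub : R (-1 / X) = ∫ t in Set.Ioi (0 : ℝ),
      |(-((t : ℝ) ^ 2)⁻¹)| • (F t⁻¹ * (-1 / X - Complex.I * (t⁻¹ : ℝ)) ^ w) := by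
    have h := MeasureTheory.integral_image_eq_integral_abs_deriv_smul measurableSet_Ioi
      (fun x (hx : x ∈ Set.Ioi (0:ℝ)) => (hasDerivAt_inv (ne_of_gt hx)).hasDerivWithinAt)
      (fun a ha b hb hab => by
        simpa using congrArg (·⁻¹) hab)
      (fun t : ℝ => F t * (-1 / X - Complex.I * t) ^ w)
    rw [himg] at h
    rw [hR]
    exact h
  rw [hR X, hsub, ← MeasureTheory.integral_const_mul]
  have hcongr : ∀ t ∈ Set.Ioi (0 : ℝ),
      X ^ w * (|(-((t : ℝ) ^ 2)⁻¹)| • (F t⁻¹ * (-1 / X - Complex.I * (t⁻¹ : ℝ)) ^ w))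
        = -(F t * (X - Complex.I * t) ^ w) := by
    intro t ht
    have ht : (0:ℝ) < t := ht
    have htc : (t : ℂ) ≠ 0 := by exact_mod_cast ht.ne'
    rw [hmod t ht, abs_neg, abs_inv, abs_of_pos (by positivity), Complex.real_smul]
    push_cast
    have e1 : -1 / X - Complex.I * ((t:ℂ))⁻¹ = -((( t : ℂ) + Complex.I * X) / (X * t)) := by
      field_simp
      ring
    have e2 : X - Complex.I * (t:ℂ) = -(Complex.I * ((t:ℂ) + Complex.I * X)) := by
      linear_combination (X : ℂ) * Complex.I_mul_I
    rw [e1, e2, hw.neg_pow, hw.neg_pow, div_pow, mul_pow, mul_pow, pow_add Complex.I,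
      Complex.I_sq]
    field_simp
    rw [mul_pow, pow_add]
    ring
  rw [MeasureTheory.setIntegral_congr_fun measurableSet_Ioi hcongr, integral_neg]
  ring
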